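/- For the graph G on 11 vertices underlying the minimal flag triangulation of ℝP² (with 30 edges, given explicitly by the edge set of the triangulation in Figure 5 of the paper), the essential density m(G) equals 30/11, and G is strictly balanced: every proper nonempty subgraph H of G satisfies |E(H)|/|V(H)| < 30/11. -/

import Mathlib

/-- The graph on 11 vertices (here `v_i` is `i - 1 : Fin 11`) underlying the minimal
flag triangulation of `ℝP²` of Figure 5 of the paper, given by its 30 edges. -/
def rpTwoGraph : SimpleGraph (Fin 11) :=
  SimpleGraph.fromEdgeSet
    {s(0,1), s(0,7), s(1,2), s(1,8), s(2,8), s(2,9), s(8,9), s(0,8), s(9,10), s(8,10),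
     s(7,8), s(7,10), s(1,5), s(0,5), s(4,9), s(4,10), s(0,4), s(4,5), s(5,10), s(3,4),
     s(0,3), s(3,7), s(5,6), s(6,10), s(6,7), s(3,6), s(3,9), s(1,6), s(2,3), s(2,6)}

namespace RPTwoAux

def pairList : List (Fin 11 × Fin 11) :=
  [(0,1), (0,7), (1,2), (1,8), (2,8), (2,9), (8,9), (0,8), (9,10), (8,10),
   (7,8), (7,10), (1,5), (0,5), (4,9), (4,10), (0,4), (4,5), (5,10), (3,4),
   (0,3), (3,7), (5,6), (6,10), (6,7), (3,6), (3,9), (1,6), (2,3), (2,6)]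

def cntE (m : ℕ) : ℕ :=
  (pairList.filter (fun p => m.testBit p.1.val && m.testBit p.2.val)).length

def pop (m : ℕ) : ℕ := ((Finset.range 11).filter (fun i => m.testBit i)).card

def P (m : ℕ) : Prop :=
  11 * cntE m ≤ 30 * pop m ∧ (m ≠ 0 → m ≠ 2047 → 11 * cntE m < 30 * pop m)

instance : DecidablePred P := fun m => by unfold P; infer_instance

set_option maxRecDepth 4000 in
set_option maxHeartbeats 2000000 in
theorem chunk0 : ∀ r < 256, P (0 + r) := by decide
set_option maxRecDepth 4000 in
set_option maxHeartbeats 2000000 in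
theorem chunk1 : ∀ r < 256, P (256 + r) := by decide
set_option maxRecDepth 4000 in
set_option maxHeartbeats 2000000 in
theorem chunk2 : ∀ r < 256, P (512 + r) := by decide
set_option maxRecDepth 4000 in
set_option maxHeartbeats 2000000 in
theorem chunk3 : ∀ r < 256, P (768 + r) := by decide
set_option maxRecDepth 4000 in
set_option maxHeartbeats 2000000 in
theorem chunk4 : ∀ r < 256, P (1024 + r) := by decide
set_option maxRecDepth 4000 in
set_option maxHeartbeats 2000000 in
theorem chunk5 : ∀ r < 256, P (1280 + r) := by decide
set_option maxRecDepth 4000 in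
set_option maxHeartbeats 2000000 in
theorem chunk6 : ∀ r < 256, P (1536 + r) := by decide
set_option maxRecDepth 4000 in
set_option maxHeartbeats 2000000 in
theorem chunk7 : ∀ r < 256, P (1792 + r) := by decide

theorem keyNat : ∀ m < 2048, P m := by
  intro m hm
  have h := Nat.div_add_mod m 256
  have h2 : m % 256 < 256 := Nat.mod_lt _ (by norm_num)
  have h3 : m / 256 < 8 := by omega
  interval_cases h4 : m / 256
  · have := chunk0 (m % 256) h2; rw [show 0 + m % 256 = m by omega] at this; exact this
  · have := chunk1 (m % 256) h2; rw [show 256 + m % 256 = m by omega] at this; exact this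
  · have := chunk2 (m % 256) h2; rw [show 512 + m % 256 = m by omega] at this; exact this
  · have := chunk3 (m % 256) h2; rw [show 768 + m % 256 = m by omega] at this; exact this
  · have := chunk4 (m % 256) h2; rw [show 1024 + m % 256 = m by omega] at this; exact this
  · have := chunk5 (m % 256) h2; rw [show 1280 + m % 256 = m by omega] at this; exact this
  · have := chunk6 (m % 256) h2; rw [show 1536 + m % 256 = m by omega] at this; exact this
  · have := chunk7 (m % 256) h2; rw [show 1792 + m % 256 = m by omega] at this; exact this

instance : Std.Commutative (α := ℕ) (· ||| ·) := ⟨Nat.lor_comm⟩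
instance : Std.Associative (α := ℕ) (· ||| ·) := ⟨Nat.lor_assoc⟩

def mask (S : Finset (Fin 11)) : ℕ := S.fold (· ||| ·) 0 (fun v => 2 ^ v.val)

theorem mask_insert (a : Fin 11) (S : Finset (Fin 11)) (ha : a ∉ S) :
    mask (insert a S) = 2 ^ a.val ||| mask S := Finset.fold_insert ha

theorem mask_testBit (S : Finset (Fin 11)) (i : ℕ) :
    (mask S).testBit i = decide (∃ v ∈ S, (v : ℕ) = i) := by
  induction S using Finset.induction_on with
  | empty => simp [mask]
  | @insert a S ha ih =>
    rw [mask_insert a S ha, Nat.testBit_lor, ih]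
    by_cases h : (a : ℕ) = i
    · subst h
      simp [Nat.testBit_two_pow_self]
    · rw [Nat.testBit_two_pow_of_ne h, Bool.false_or, decide_eq_decide]
      constructor
      · rintro ⟨v, hv, rfl⟩; exact ⟨v, Finset.mem_insert_of_mem hv, rfl⟩
      · rintro ⟨v, hv, rfl⟩
        rcases Finset.mem_insert.mp hv with rfl | hv
        · exact absurd rfl h
        · exact ⟨v, hv, rfl⟩

theorem mask_lt (S : Finset (Fin 11)) : mask S < 2048 := by
  induction S using Finset.induction_on with
  | empty => simp [mask]
  | @insert a S ha ih =>
    rw [mask_insert a S ha]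
    have h1 : 2 ^ a.val < 2 ^ 11 := Nat.pow_lt_pow_right (by norm_num) a.isLt
    exact Nat.or_lt_two_pow (n := 11) h1 ih

theorem mask_ne_zero {S : Finset (Fin 11)} (hS : S.Nonempty) : mask S ≠ 0 := by
  obtain ⟨v, hv⟩ := hS
  intro h
  have := mask_testBit S v.val
  rw [h, Nat.zero_testBit] at this
  have : ∃ w ∈ S, (w : ℕ) = v.val := ⟨v, hv, rfl⟩
  simp_all

theorem mask_ne_full {S : Finset (Fin 11)} (hS : S ≠ Finset.univ) : mask S ≠ 2047 := by
  intro h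
  apply hS
  ext v
  simp only [Finset.mem_univ, iff_true]
  have := mask_testBit S v.val
  rw [h] at this
  have hb : Nat.testBit 2047 v.val = true := by
    have : v.val < 11 := v.isLt
    interval_cases h : v.val <;> decide
  rw [hb] at this
  obtain ⟨w, hw, hwv⟩ := of_decide_eq_true this.symm
  rwa [show w = v from Fin.ext hwv] at hw

theorem pop_mask (S : Finset (Fin 11)) : pop (mask S) = S.card := by
  have himg : (Finset.range 11).filter (fun i => (mask S).testBit i) = S.image Fin.val := by
    ext i
    simp only [Finset.mem_filter, Finset.mem_range, Finset.mem_image, mask_testBit,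
      decide_eq_true_eq]
    constructor
    · rintro ⟨hi, v, hv, rfl⟩; exact ⟨v, hv, rfl⟩
    · rintro ⟨v, hv, rfl⟩; exact ⟨v.isLt, v, hv, rfl⟩
  rw [pop, himg, Finset.card_image_of_injective _ Fin.val_injective]

theorem cntE_mask (S : Finset (Fin 11)) :
    cntE (mask S) =
      (pairList.filter (fun p => decide (p.1 ∈ S) && decide (p.2 ∈ S))).length := by
  unfold cntE
  congr 1
  apply List.filter_congr
  intro p _
  have h1 : ∀ v : Fin 11, (mask S).testBit v.val = decide (v ∈ S) := by
    intro v
    rw [mask_testBit, decide_eq_decide]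
    constructor
    · rintro ⟨w, hw, hwv⟩; rwa [show w = v from Fin.ext hwv] at hw
    · intro hv; exact ⟨v, hv, rfl⟩
  rw [h1, h1]

set_option synthInstance.maxSize 4000 in
set_option synthInstance.maxHeartbeats 1000000 in
set_option maxRecDepth 10000 in
set_option maxHeartbeats 4000000 in
theorem edgeSet_eq :
    rpTwoGraph.edgeSet = (((pairList.map Sym2.mk.uncurry).toFinset : Finset (Sym2 (Fin 11))) :
      Set (Sym2 (Fin 11))) := by
  rw [rpTwoGraph, SimpleGraph.edgeSet_fromEdgeSet]
  ext e
  simp only [Set.mem_diff, Set.mem_insert_iff, Set.mem_singleton_iff, Set.mem_setOf_eq,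
    Finset.coe_sort_coe, List.coe_toFinset, List.mem_map, Set.mem_setOf_eq, pairList,
    List.mem_cons, List.not_mem_nil, or_false]
  revert e
  decide

end RPTwoAux

open RPTwoAux
/-- For the graph `G` underlying the minimal flag triangulation of `ℝP²`, every
nonempty subgraph `H` satisfies `|E(H)|/|V(H)| ≤ 30/11`, the whole graph attains the
ratio `30/11` (so the essential density is `m(G) = 30/11`), and `G` is strictly
balanced: every proper nonempty subgraph has ratio strictly less than `30/11`. -/
theorem rpTwoGraph_essential_density :
    (∀ H : rpTwoGraph.Subgraph, H.verts.Nonempty →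
      (H.edgeSet.ncard : ℚ) / (H.verts.ncard : ℚ) ≤ 30 / 11) ∧
    ((((⊤ : rpTwoGraph.Subgraph).edgeSet.ncard : ℚ) /
        (((⊤ : rpTwoGraph.Subgraph).verts.ncard : ℚ))) = 30 / 11) ∧
    (∀ H : rpTwoGraph.Subgraph, H ≠ ⊤ → H.verts.Nonempty →
      (H.edgeSet.ncard : ℚ) / (H.verts.ncard : ℚ) < 30 / 11) := by
  classical
  -- general counting bound for a subgraph
  have hcount : ∀ H : rpTwoGraph.Subgraph,
      H.edgeSet.ncard ≤ cntE (mask (Set.toFinite H.verts).toFinset) := by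
    intro H
    set S := (Set.toFinite H.verts).toFinset with hSdef
    rw [cntE_mask]
    set L := pairList.filter (fun p => decide (p.1 ∈ S) && decide (p.2 ∈ S)) with hL
    have hsub : H.edgeSet ⊆ ((L.map Sym2.mk.uncurry).toFinset : Set (Sym2 (Fin 11))) := by
      intro e he
      have heG : e ∈ rpTwoGraph.edgeSet := H.edgeSet_subset he
      rw [edgeSet_eq] at heG
      simp only [List.coe_toFinset, Set.mem_setOf_eq, List.mem_map] at heG
      obtain ⟨p, hp, rfl⟩ := heG
      have h1 : p.1 ∈ H.verts := H.mem_verts_of_mem_edge he (Sym2.mem_mk_left _ _)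
      have h2 : p.2 ∈ H.verts := H.mem_verts_of_mem_edge he (Sym2.mem_mk_right _ _)
      simp only [List.coe_toFinset, Set.mem_setOf_eq, List.mem_map]
      refine ⟨p, ?_, rfl⟩
      rw [hL, List.mem_filter]
      refine ⟨hp, ?_⟩
      simp only [Bool.and_eq_true, decide_eq_true_eq]
      exact ⟨(Set.Finite.mem_toFinset _).mpr h1, (Set.Finite.mem_toFinset _).mpr h2⟩
    calc H.edgeSet.ncard ≤ ((L.map Sym2.mk.uncurry).toFinset : Set (Sym2 (Fin 11))).ncard :=
          Set.ncard_le_ncard hsub (Set.toFinite _)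
      _ = (L.map Sym2.mk.uncurry).toFinset.card := Set.ncard_coe_finset _
      _ ≤ (L.map Sym2.mk.uncurry).length := List.toFinset_card_le _
      _ = L.length := List.length_map _
  have hverts : ∀ H : rpTwoGraph.Subgraph,
      H.verts.ncard = (Set.toFinite H.verts).toFinset.card := fun H =>
    Set.ncard_eq_toFinset_card _ _
  have hGedges : rpTwoGraph.edgeSet.ncard = 30 := by
    rw [edgeSet_eq, Set.ncard_coe_finset]
    decide
  refine ⟨?_, ?_, ?_⟩
  · -- upper bound for all nonempty subgraphs
    intro H hne
    have hS : (Set.toFinite H.verts).toFinset.Nonempty := by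
      obtain ⟨v, hv⟩ := hne
      exact ⟨v, (Set.Finite.mem_toFinset _).mpr hv⟩
    have hkey := (keyNat _ (mask_lt (Set.toFinite H.verts).toFinset)).1
    rw [pop_mask] at hkey
    have h1 : 11 * H.edgeSet.ncard ≤ 30 * H.verts.ncard := by
      rw [hverts H]
      calc 11 * H.edgeSet.ncard ≤ 11 * cntE (mask (Set.toFinite H.verts).toFinset) :=
            Nat.mul_le_mul_left _ (hcount H)
        _ ≤ 30 * (Set.toFinite H.verts).toFinset.card := hkey
    have hn : 0 < H.verts.ncard := by
      rw [hverts H]; exact Finset.card_pos.mpr hS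
    rw [div_le_div_iff₀ (by exact_mod_cast hn) (by norm_num)]
    have h1' := (Nat.cast_le (α := ℚ)).mpr h1
    push_cast at h1'
    linarith
  · -- the whole graph attains 30/11
    have h1 : (⊤ : rpTwoGraph.Subgraph).edgeSet.ncard = 30 := by
      rw [SimpleGraph.Subgraph.edgeSet_top]; exact hGedges
    have h2 : (⊤ : rpTwoGraph.Subgraph).verts.ncard = 11 := by
      rw [SimpleGraph.Subgraph.verts_top, Set.ncard_univ, Nat.card_eq_fintype_card,
        Fintype.card_fin]
    rw [h1, h2]; norm_num
  · -- strict inequality for proper nonempty subgraphs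
    intro H hne' hne
    set S := (Set.toFinite H.verts).toFinset with hSdef
    have hS : S.Nonempty := by
      obtain ⟨v, hv⟩ := hne
      exact ⟨v, (Set.Finite.mem_toFinset _).mpr hv⟩
    have hn : 0 < H.verts.ncard := by
      rw [hverts H]; exact Finset.card_pos.mpr hS
    have hstrict : 11 * H.edgeSet.ncard < 30 * H.verts.ncard := by
      by_cases hSu : S = Finset.univ
      · -- full vertex set: H must be missing an edge
        have hvu : H.verts = Set.univ := by
          ext v; simp only [Set.mem_univ, iff_true]
          have : v ∈ S := hSu ▸ Finset.mem_univ v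
          exact (Set.Finite.mem_toFinset _).mp this
        have hedge : H.edgeSet.ncard < 30 := by
          rcases lt_or_ge H.edgeSet.ncard 30 with h | h
          · exact h
          · exfalso
            apply hne'
            have heq : H.edgeSet = rpTwoGraph.edgeSet := by
              apply Set.eq_of_subset_of_ncard_le H.edgeSet_subset _ (Set.toFinite _)
              rw [hGedges]; exact h
            apply SimpleGraph.Subgraph.ext
            · rw [hvu, SimpleGraph.Subgraph.verts_top]
            · funext x y
              apply propext
              rw [← SimpleGraph.Subgraph.mem_edgeSet, heq, SimpleGraph.mem_edgeSet]
              exact Iff.symm (by simp [SimpleGraph.Subgraph.top_adj])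
        have hv11 : H.verts.ncard = 11 := by
          rw [hvu, Set.ncard_univ, Nat.card_eq_fintype_card, Fintype.card_fin]
        rw [hv11]; omega
      · have hkey := (keyNat _ (mask_lt S)).2 (mask_ne_zero hS) (mask_ne_full hSu)
        rw [pop_mask] at hkey
        rw [hverts H]
        calc 11 * H.edgeSet.ncard ≤ 11 * cntE (mask S) :=
              Nat.mul_le_mul_left _ (hcount H)
          _ < 30 * S.card := hkey
    rw [div_lt_div_iff₀ (by exact_mod_cast hn) (by norm_num)]
    have h1' := (Nat.cast_lt (α := ℚ)).mpr hstrict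
    push_cast at h1'
    linarith
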